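/- For the complex-conjugation function f(z) = conj(z), the difference quotient Δf(z_0, z_1) = (conj(z_1) − conj(z_0))/(z_1 − z_0) is not locally bounded near any diagonal point in the following sense: for every z ∈ ℂ, Δ²f is unbounded on every punctured neighborhood of (z,z,z) in C³(ℂ); equivalently, conj is not of class B²_Δ(ℂ). -/

import Mathlib

/-- The difference operator. -/
noncomputable def delta (n : ℕ) (f : (Fin (n + 1) → ℂ) → ℂ) :
    (Fin (n + 2) → ℂ) → ℂ :=
  fun z => (f (fun i => z i.succ) - f (fun i => z i.castSucc)) /
    (z (Fin.last (n + 1)) - z 0)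

/-- `k`-fold iteration of the difference operator, starting from a 1-variable function. -/
noncomputable def deltaIter (f : (Fin 1 → ℂ) → ℂ) : (k : ℕ) → (Fin (k + 1) → ℂ) → ℂ
  | 0 => f
  | k + 1 => delta k (deltaIter f k)

/-- Complex conjugation, viewed as a symmetric 1-variable function. -/
noncomputable def conjF : (Fin 1 → ℂ) → ℂ := fun v => (starRingEnd ℂ) (v 0)

lemma deltaIter_val (z : ℂ) (t : ℝ) (ht : t ≠ 0) :
    deltaIter conjF 2 ![z, z + t, z + t + t * Complex.I] = -2 / (t * (1 + Complex.I)) := by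
  have h1 : ((t:ℂ) * Complex.I) ≠ 0 := by
    simp [Complex.ext_iff, Complex.I_ne_zero, ht]
  have h2 : (t:ℂ) ≠ 0 := by exact_mod_cast Complex.ofReal_ne_zero.mpr ht
  simp only [deltaIter, delta, conjF, Fin.isValue]
  norm_num [Fin.last, Fin.succ, Fin.castSucc, Fin.castAdd, Fin.castLE, Matrix.cons_val_zero,
    Matrix.cons_val_one, Matrix.head_cons, Matrix.cons_val_fin_one, map_add, Complex.conj_ofReal,
    Complex.conj_I]
  field_simp
  rw [show z + (t:ℂ) + t * Complex.I - z = t * (1 + Complex.I) by ring, mul_div_mul_left _ _ h2]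
  ring

/-- For every `z ∈ ℂ`, the second iterated difference quotient `Δ²(conj)` is
unbounded on (the distinct-tuple part of) every neighborhood of `(z, z, z)`:
complex conjugation is not of class `B²_Δ(ℂ)`. -/
theorem stmt3 (z : ℂ) (U : Set (Fin 3 → ℂ)) (hU : U ∈ nhds (fun _ => z : Fin 3 → ℂ)) :
    ¬ ∃ M : ℝ, ∀ w ∈ U, Function.Injective w → ‖deltaIter conjF 2 w‖ ≤ M := by
  rintro ⟨M, hM⟩
  obtain ⟨ε, hε, hball⟩ := Metric.mem_nhds_iff.mp hU
  set t : ℝ := min ε (1 / (|M| + 1)) / 3 with htdef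
  have hMpos : (0:ℝ) < |M| + 1 := by positivity
  have ht : 0 < t := by positivity
  have ht3 : t ≤ ε / 3 := by
    apply div_le_div_of_nonneg_right (min_le_left _ _) (by norm_num)
  have htε : t < ε := by linarith
  set w : Fin 3 → ℂ := ![z, z + t, z + t + t * Complex.I] with hw
  have h2 : (t:ℂ) ≠ 0 := Complex.ofReal_ne_zero.mpr ht.ne'
  have hwU : w ∈ U := by
    apply hball
    rw [Metric.mem_ball, dist_pi_lt_iff hε]
    intro i
    fin_cases i
    · simpa [w] using hε
    · show dist (w 1) z < ε
      have hwe : w 1 = z + t := rfl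
      rw [hwe, Complex.dist_eq]
      have : z + (t:ℂ) - z = (t:ℝ) := by ring
      rw [this, Complex.norm_real, Real.norm_eq_abs, abs_of_pos ht]; linarith
    · show dist (w 2) z < ε
      have : w 2 = z + t + t * Complex.I := rfl
      rw [this, Complex.dist_eq]
      have : z + (t:ℂ) + t * Complex.I - z = Complex.mk t t := by
        simp [Complex.ext_iff]
      rw [this]
      rw [Complex.norm_def, Complex.normSq_mk, Real.sqrt_lt' hε]
      nlinarith
  have e0 : w 0 = z := rfl
  have e1 : w 1 = z + t := rfl
  have e2 : w 2 = z + t + t * Complex.I := rfl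
  have hI : (t:ℂ) * Complex.I ≠ 0 := mul_ne_zero h2 Complex.I_ne_zero
  have hti : (t:ℂ) + t * Complex.I ≠ 0 := by
    intro h
    have h' := congrArg Complex.re h
    simp at h'
    exact ht.ne' h'
  have hinj : Function.Injective w := by
    intro i j hij
    fin_cases i <;> fin_cases j <;> simp only [Fin.mk_zero, Fin.mk_one] at hij ⊢ <;>
      first
      | rfl
      | (exfalso
         rw [show (⟨2, by norm_num⟩ : Fin 3) = 2 from rfl] at hij
         first
         | rw [e0, e1] at hij
         | rw [e0, e2] at hij
         | rw [e1, e0] at hij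
         | rw [e1, e2] at hij
         | rw [e2, e0] at hij
         | rw [e2, e1] at hij
         first
         | exact h2 (by linear_combination hij)
         | exact h2 (by linear_combination -hij)
         | exact hI (by linear_combination hij)
         | exact hI (by linear_combination -hij)
         | exact hti (by linear_combination hij)
         | exact hti (by linear_combination -hij))
      | (exfalso
         first
         | rw [e0, e1] at hij
         | rw [e1, e0] at hij
         first
         | exact h2 (by linear_combination hij)
         | exact h2 (by linear_combination -hij))
  have hval := deltaIter_val z t ht.ne'
  have habs : ‖deltaIter conjF 2 w‖ = 2 / (t * ‖1 + Complex.I‖) := by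
    rw [hw, hval]
    rw [norm_div, norm_mul]
    simp [abs_of_pos ht]
  have hb := hM w hwU hinj
  rw [habs] at hb
  have habsI : ‖1 + Complex.I‖ = Real.sqrt 2 := by
    simp [Complex.norm_def, Complex.normSq_apply]
    norm_num
  have hs2 : Real.sqrt 2 < 2 := by
    nlinarith [Real.sq_sqrt (by norm_num : (2:ℝ) ≥ 0), Real.sqrt_nonneg 2]
  have ht1 : t ≤ 1 / (|M| + 1) / 3 := by
    apply div_le_div_of_nonneg_right (min_le_right _ _) (by norm_num)
  have key : M < 2 / (t * ‖1 + Complex.I‖) := by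
    rw [habsI]
    have hsp : (0:ℝ) < Real.sqrt 2 := by positivity
    have h4 : 1 / t ≤ 2 / (t * Real.sqrt 2) := by
      rw [div_le_div_iff₀ ht (by positivity)]
      nlinarith
    have h5 : 3 * (|M| + 1) ≤ 1 / t := by
      rw [le_div_iff₀ ht]
      calc 3 * (|M| + 1) * t ≤ 3 * (|M| + 1) * (1 / (|M| + 1) / 3) := by
            apply mul_le_mul_of_nonneg_left ht1 (by positivity)
        _ = 1 := by field_simp
    have h6 : M ≤ |M| := le_abs_self M
    linarith
  linarith
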